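/- Let A ∈ ℝ^{n×n} be diagonalizable, A = P^{-1} Q P with Q diagonal, and let ρ = max_i |Q_{ii}| be the spectral radius of A and μ = ‖P‖₂ ‖P^{-1}‖₂. If matrices A_1, …, A_T ∈ ℝ^{n×n} satisfy ‖A_t − A‖₂ ≤ δ for all t ∈ {1, …, T}, then ‖A_T A_{T−1} ⋯ A_1‖₂ ≤ μ (ρ + μ δ)^T. -/

import Mathlib

open Matrix

/-- Spectral (ℓ²-operator) norm of a real matrix. -/
noncomputable def specNorm {m n : Type*} [Fintype m] [Fintype n] [DecidableEq n]
    (A : Matrix m n ℝ) : ℝ :=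
  ‖LinearMap.toContinuousLinearMap (Matrix.toEuclideanLin A)‖

open scoped Matrix.Norms.L2Operator in
private lemma specNorm_eq_l2 {m n : Type*} [Fintype m] [Fintype n] [DecidableEq n]
    (A : Matrix m n ℝ) : specNorm A = ‖A‖ := rfl

open scoped Matrix.Norms.L2Operator in
private lemma l2_norm_one_le {n : ℕ} : ‖(1 : Matrix (Fin n) (Fin n) ℝ)‖ ≤ 1 := by
  rw [Matrix.l2_opNorm_def]
  apply ContinuousLinearMap.opNorm_le_bound _ zero_le_one
  intro x
  simp [Matrix.toEuclideanLin_apply]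

open scoped Matrix.Norms.L2Operator in
private lemma l2_norm_diagonal_le {n : ℕ} [Nonempty (Fin n)] (d : Fin n → ℝ) (ρ : ℝ)
    (hd : ∀ i, |d i| ≤ ρ) :
    ‖(Matrix.diagonal d : Matrix (Fin n) (Fin n) ℝ)‖ ≤ ρ := by
  have hρ0 : 0 ≤ ρ := le_trans (abs_nonneg _) (hd (Classical.arbitrary _))
  rw [Matrix.l2_opNorm_def]
  apply ContinuousLinearMap.opNorm_le_bound _ hρ0
  intro x
  show ‖Matrix.toEuclideanLin (Matrix.diagonal d) x‖ ≤ ρ * ‖x‖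
  rw [EuclideanSpace.norm_eq, EuclideanSpace.norm_eq]
  have h1 : ∀ i, ‖Matrix.toEuclideanLin (Matrix.diagonal d) x i‖ ^ 2
      ≤ ρ ^ 2 * ‖x i‖ ^ 2 := by
    intro i
    have : Matrix.toEuclideanLin (Matrix.diagonal d) x i = d i * x i := by
      simp [Matrix.toEuclideanLin_apply, Matrix.mulVec_diagonal]
    rw [this]
    have h2 : |d i * x i| ≤ ρ * |x i| := by
      rw [abs_mul]
      exact mul_le_mul_of_nonneg_right (hd i) (abs_nonneg _)
    calc ‖d i * x i‖ ^ 2 = |d i * x i| ^ 2 := rfl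
      _ ≤ (ρ * |x i|) ^ 2 := by
          apply pow_le_pow_left₀ (abs_nonneg _) h2
      _ = ρ ^ 2 * ‖x i‖ ^ 2 := by rw [mul_pow]; rfl
  calc √ (∑ i, ‖Matrix.toEuclideanLin (Matrix.diagonal d) x i‖ ^ 2)
      ≤ √ (∑ i, ρ ^ 2 * ‖x i‖ ^ 2) := by
        apply Real.sqrt_le_sqrt (Finset.sum_le_sum fun i _ => h1 i)
    _ = ρ * √ (∑ i, ‖x i‖ ^ 2) := by
        rw [← Finset.mul_sum, Real.sqrt_mul (sq_nonneg _), Real.sqrt_sq hρ0]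

private lemma list_conj_prod {n : ℕ} (P R : Matrix (Fin n) (Fin n) ℝ)
    (h1 : P * R = 1) (h2 : R * P = 1) (l : List (Matrix (Fin n) (Fin n) ℝ)) :
    (l.map (fun X => R * X * P)).prod = R * l.prod * P := by
  induction l with
  | nil => simp [h2]
  | cons a t ih =>
      simp only [List.map_cons, List.prod_cons, ih]
      calc R * a * P * (R * t.prod * P) = R * a * (P * R) * t.prod * P := by
            noncomm_ring
        _ = R * (a * t.prod) * P := by rw [h1]; noncomm_ring

open scoped Matrix.Norms.L2Operator in
private lemma list_prod_norm_le {n : ℕ} (c : ℝ)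
    (l : List (Matrix (Fin n) (Fin n) ℝ)) (h : ∀ x ∈ l, ‖x‖ ≤ c) :
    ‖l.prod‖ ≤ c ^ l.length := by
  induction l with
  | nil => simpa using l2_norm_one_le
  | cons a t ih =>
      have hc : 0 ≤ c := le_trans (norm_nonneg a) (h a List.mem_cons_self)
      simp only [List.prod_cons, List.length_cons, pow_succ']
      calc ‖a * t.prod‖ ≤ ‖a‖ * ‖t.prod‖ := norm_mul_le a t.prod
        _ ≤ c * c ^ t.length := by
            apply mul_le_mul (h a List.mem_cons_self)
              (ih fun x hx => h x (List.mem_cons_of_mem a hx))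
              (norm_nonneg _) hc

open scoped Matrix.Norms.L2Operator in
/-- If `A = P⁻¹ Q P` with `Q` diagonal, `ρ` bounding the moduli of the
diagonal entries of `Q` (the spectral radius of `A`), `μ = ‖P‖₂‖P⁻¹‖₂`, and
`‖A_t − A‖₂ ≤ δ` for `t = 1, …, T`, then `‖A_T ⋯ A_1‖₂ ≤ μ (ρ + μ δ)^T`. -/
theorem perturbed_power_bound {n T : ℕ}
    (A P Q : Matrix (Fin n) (Fin n) ℝ)
    (hP : IsUnit P) (hQ : Q.IsDiag) (hA : A = P⁻¹ * Q * P)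
    (ρ μ δ : ℝ) (hρ : ∀ i, |Q i i| ≤ ρ)
    (hμ : μ = specNorm P * specNorm P⁻¹)
    (A' : Fin T → Matrix (Fin n) (Fin n) ℝ)
    (hA' : ∀ t, specNorm (A' t - A) ≤ δ) :
    specNorm ((List.ofFn A').reverse.prod) ≤ μ * (ρ + μ * δ) ^ T := by
  rcases Nat.eq_zero_or_pos n with hn | hn
  · subst hn
    have hz : ∀ M : Matrix (Fin 0) (Fin 0) ℝ, specNorm M = 0 := fun M => by
      rw [Subsingleton.elim M 0, specNorm_eq_l2, norm_zero]
    rw [hz, hμ, hz, hz]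
    simp
  · haveI : Nonempty (Fin n) := ⟨⟨0, hn⟩⟩
    have hdet : IsUnit P.det := (Matrix.isUnit_iff_isUnit_det P).mp hP
    have h1 : P * P⁻¹ = 1 := Matrix.mul_nonsing_inv P hdet
    have h2 : P⁻¹ * P = 1 := Matrix.nonsing_inv_mul P hdet
    -- conjugated matrices
    set C : Fin T → Matrix (Fin n) (Fin n) ℝ := fun t => P * A' t * P⁻¹ with hC
    have hAC : A' = fun t => P⁻¹ * C t * P := by
      funext t
      simp only [hC]
      have : P⁻¹ * (P * A' t * P⁻¹) * P = A' t := by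
        calc P⁻¹ * (P * A' t * P⁻¹) * P = (P⁻¹ * P) * A' t * (P⁻¹ * P) := by noncomm_ring
          _ = A' t := by rw [h2, one_mul, mul_one]
      exact this.symm
    -- norm bound on each C t
    have hμ0 : 0 ≤ μ := by
      rw [hμ, specNorm_eq_l2, specNorm_eq_l2]
      exact mul_nonneg (norm_nonneg _) (norm_nonneg _)
    have hQρ : ‖Q‖ ≤ ρ := by
      rw [← hQ.diagonal_diag]
      exact l2_norm_diagonal_le _ ρ hρ
    have hCbound : ∀ t, ‖C t‖ ≤ ρ + μ * δ := by
      intro t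
      have hdecomp : C t = Q + P * (A' t - A) * P⁻¹ := by
        have hPAP : P * A * P⁻¹ = Q := by
          rw [hA]
          calc P * (P⁻¹ * Q * P) * P⁻¹ = (P * P⁻¹) * Q * (P * P⁻¹) := by noncomm_ring
            _ = Q := by rw [h1, one_mul, mul_one]
        calc C t = P * (A + (A' t - A)) * P⁻¹ := by simp [hC]
          _ = P * A * P⁻¹ + P * (A' t - A) * P⁻¹ := by noncomm_ring
          _ = Q + P * (A' t - A) * P⁻¹ := by rw [hPAP]
      rw [hdecomp]
      calc ‖Q + P * (A' t - A) * P⁻¹‖ ≤ ‖Q‖ + ‖P * (A' t - A) * P⁻¹‖ := norm_add_le _ _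
        _ ≤ ρ + μ * δ := by
            apply add_le_add hQρ
            calc ‖P * (A' t - A) * P⁻¹‖ ≤ ‖P‖ * ‖A' t - A‖ * ‖P⁻¹‖ :=
                le_trans (norm_mul_le _ _)
                  (mul_le_mul_of_nonneg_right (norm_mul_le _ _) (norm_nonneg _))
              _ ≤ ‖P‖ * δ * ‖P⁻¹‖ := by
                  apply mul_le_mul_of_nonneg_right _ (norm_nonneg _)
                  exact mul_le_mul_of_nonneg_left
                    (by rw [← specNorm_eq_l2]; exact hA' t) (norm_nonneg _)
              _ = μ * δ := by rw [hμ, specNorm_eq_l2, specNorm_eq_l2]; ring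
    -- telescoping
    have hlist : (List.ofFn A').reverse = ((List.ofFn C).reverse).map
        (fun X => P⁻¹ * X * P) := by
      rw [List.map_reverse, List.map_ofFn]
      exact congrArg List.reverse (congrArg List.ofFn (funext fun t => by
        show A' t = P⁻¹ * C t * P
        rw [hAC]))
    have hprodnorm : ‖((List.ofFn C).reverse).prod‖ ≤ (ρ + μ * δ) ^ T := by
      have hlen : ((List.ofFn C).reverse).length = T := by simp
      have := list_prod_norm_le (ρ + μ * δ) ((List.ofFn C).reverse) (by
        intro x hx
        rw [List.mem_reverse, List.mem_ofFn] at hx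
        obtain ⟨t, rfl⟩ := hx
        exact hCbound t)
      rwa [hlen] at this
    rw [specNorm_eq_l2, hlist, list_conj_prod P P⁻¹ h1 h2]
    calc ‖P⁻¹ * ((List.ofFn C).reverse).prod * P‖
        ≤ ‖P⁻¹‖ * ‖((List.ofFn C).reverse).prod‖ * ‖P‖ :=
          le_trans (norm_mul_le _ _)
            (mul_le_mul_of_nonneg_right (norm_mul_le _ _) (norm_nonneg _))
      _ ≤ ‖P⁻¹‖ * ((ρ + μ * δ) ^ T) * ‖P‖ := by
          apply mul_le_mul_of_nonneg_right _ (norm_nonneg _)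
          exact mul_le_mul_of_nonneg_left hprodnorm (norm_nonneg _)
      _ = μ * (ρ + μ * δ) ^ T := by rw [hμ, specNorm_eq_l2, specNorm_eq_l2]; ring
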